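/- arXiv:1912.13041 — 2 statements merged into one kernel-verified Lean document; each statement's English description precedes it below -/
import Mathlib

section
/- Let σ : [0,1] → {-1,1} be a right-continuous step function with exactly n jumps (flips), and let k ≥ 1. Then the Fourier coefficients of σ against e_{2k}(t) = √2 sin(2πkt) and e_{2k+1}(t) = √2 cos(2πkt) satisfy |∫₀¹ e_{2k}(t)σ(t)dt| ≤ √2·n/k and |∫₀¹ e_{2k+1}(t)σ(t)dt| ≤ √2·n/k. -/
open Real Set

private lemma int_sin_mul (c p q : ℝ) (hc : c ≠ 0) :
    ∫ t in p..q, Real.sin (c * t) = (Real.cos (c * p) - Real.cos (c * q)) / c := by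
  rw [intervalIntegral.integral_comp_mul_left Real.sin hc, integral_sin, smul_eq_mul]
  field_simp

private lemma int_cos_mul (c p q : ℝ) (hc : c ≠ 0) :
    ∫ t in p..q, Real.cos (c * t) = (Real.sin (c * q) - Real.sin (c * p)) / c := by
  rw [intervalIntegral.integral_comp_mul_left Real.cos hc, integral_cos, smul_eq_mul]
  field_simp

private lemma piece_lemma (f σ : ℝ → ℝ) (hf : Continuous f) {p q : ℝ} (hpq : p ≤ q)
    (hg : ∀ t ∈ Set.Ico p q, σ t = σ p) :
    IntervalIntegrable (fun t => f t * σ t) MeasureTheory.volume p q ∧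
      ∫ t in p..q, f t * σ t = σ p * ∫ t in p..q, f t := by
  have hne : ∀ᵐ (t : ℝ) ∂MeasureTheory.volume, t ≠ q := by
    rw [MeasureTheory.ae_iff]
    simp only [ne_eq, not_not, Set.setOf_eq_eq_singleton]
    exact Real.volume_singleton
  have hae : ∀ᵐ t ∂(MeasureTheory.volume.restrict (Set.Ioc p q)), f t * σ p = f t * σ t := by
    filter_upwards [MeasureTheory.ae_restrict_mem measurableSet_Ioc,
      MeasureTheory.ae_restrict_of_ae hne] with t ht htq
    rw [hg t ⟨ht.1.le, ht.2.lt_of_ne htq⟩]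
  have hI : IntervalIntegrable (fun t => f t * σ p) MeasureTheory.volume p q :=
    (hf.intervalIntegrable p q).mul_const _
  constructor
  · refine hI.congr_ae ?_
    rwa [Set.uIoc_of_le hpq]
  · rw [intervalIntegral.integral_of_le hpq, intervalIntegral.integral_of_le hpq,
      ← MeasureTheory.integral_congr_ae hae, MeasureTheory.integral_mul_const, mul_comm]

private lemma step_decomp (n : ℕ) (σ : ℝ → ℝ) (a : Fin (n + 2) → ℝ)
    (ha0 : a 0 = 0) (ha1 : a (Fin.last (n + 1)) = 1) (hmono : StrictMono a)
    (hconst : ∀ i : Fin (n + 1),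
      ∀ t ∈ Set.Ico (a i.castSucc) (a i.succ), σ t = σ (a i.castSucc))
    (f : ℝ → ℝ) (hf : Continuous f) :
    ∫ t in (0:ℝ)..1, f t * σ t
      = ∑ i : Fin (n + 1), σ (a i.castSucc) * ∫ t in (a i.castSucc)..(a i.succ), f t := by
  set b : ℕ → ℝ := fun j => a ⟨min j (n + 1), by omega⟩ with hb
  have h1 : ∀ i : Fin (n + 1), b i = a i.castSucc := by
    intro i
    simp only [hb]
    congr 1
    ext
    simp only [Fin.coe_castSucc]
    omega
  have h2 : ∀ i : Fin (n + 1), b (i + 1) = a i.succ := by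
    intro i
    simp only [hb]
    congr 1
    ext
    simp only [Fin.val_succ]
    omega
  have hpq : ∀ i : Fin (n + 1), a i.castSucc ≤ a i.succ := fun i =>
    (hmono (Fin.castSucc_lt_succ (i := i))).le
  have hi' : ∀ i < n + 1, IntervalIntegrable (fun t => f t * σ t) MeasureTheory.volume
      (b i) (b (i + 1)) := by
    intro i hi
    rw [show (i:ℕ) = ((⟨i, hi⟩ : Fin (n+1)) : ℕ) from rfl, h1 ⟨i, hi⟩, h2 ⟨i, hi⟩]
    exact (piece_lemma f σ hf (hpq _) (hconst _)).1
  have key := intervalIntegral.sum_integral_adjacent_intervals hi'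
  have hb0 : b 0 = 0 := by
    rw [← ha0]
    simp only [hb]
    congr 1
  have hb1 : b (n + 1) = 1 := by
    rw [← ha1]
    simp only [hb]
    congr 1
    ext
    simp [Fin.last]
  rw [hb0, hb1] at key
  rw [← key, ← Fin.sum_univ_eq_sum_range
    (fun i => ∫ t in b i..b (i + 1), f t * σ t) (n + 1)]
  refine Finset.sum_congr rfl fun i _ => ?_
  rw [h1 i, h2 i]
  exact (piece_lemma f σ hf (hpq i) (hconst i)).2

private lemma abs_integral_le (n : ℕ) (σ : ℝ → ℝ)
    (hval : ∀ t ∈ Set.Ico (0:ℝ) 1, σ t = 1 ∨ σ t = -1)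
    (a : Fin (n + 2) → ℝ)
    (ha0 : a 0 = 0) (ha1 : a (Fin.last (n + 1)) = 1) (hmono : StrictMono a)
    (hconst : ∀ i : Fin (n + 1),
      ∀ t ∈ Set.Ico (a i.castSucc) (a i.succ), σ t = σ (a i.castSucc))
    (f : ℝ → ℝ) (hf : Continuous f) (M : ℝ)
    (hM : ∀ p q : ℝ, |∫ t in p..q, f t| ≤ M)
    (hfull : ∫ t in (0:ℝ)..1, f t = 0) :
    |∫ t in (0:ℝ)..1, f t * σ t| ≤ if n = 0 then 0 else ((n:ℝ) + 1) * M := by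
  rw [step_decomp n σ a ha0 ha1 hmono hconst f hf]
  rcases Nat.eq_zero_or_pos n with h0 | hpos
  · subst h0
    rw [if_pos rfl, Fin.sum_univ_succ, Fin.sum_univ_zero, add_zero]
    have e1 : ((0 : Fin 1).castSucc : Fin 2) = 0 := rfl
    have e2 : ((0 : Fin 1).succ : Fin 2) = Fin.last 1 := rfl
    rw [e1, e2, ha0, ha1, hfull, mul_zero, abs_zero]
  · rw [if_neg hpos.ne']
    calc |∑ i : Fin (n + 1), σ (a i.castSucc) * ∫ t in (a i.castSucc)..(a i.succ), f t|
        ≤ ∑ i : Fin (n + 1), |σ (a i.castSucc) * ∫ t in (a i.castSucc)..(a i.succ), f t| :=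
          Finset.abs_sum_le_sum_abs _ _
      _ ≤ ∑ _i : Fin (n + 1), M := by
          refine Finset.sum_le_sum fun i _ => ?_
          rw [abs_mul]
          have hmem : a i.castSucc ∈ Set.Ico (0:ℝ) 1 := by
            constructor
            · rw [← ha0]; exact hmono.monotone (Fin.zero_le _)
            · rw [← ha1]; exact hmono (Fin.castSucc_lt_last i)
          have h1 : |σ (a i.castSucc)| = 1 := by
            rcases hval _ hmem with h | h <;> rw [h] <;> norm_num
          rw [h1, one_mul]
          exact hM _ _
      _ = ((n:ℝ) + 1) * M := by
          rw [Finset.sum_const, Finset.card_univ, Fintype.card_fin, nsmul_eq_mul]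
          push_cast
          ring

private lemma arith_lemma (s x y : ℝ) (hs : 0 ≤ s) (hx : 1 ≤ x) (hy : 1 ≤ y) :
    (x + 1) * (s * 2 / (2 * π * y)) ≤ s * x / y := by
  have hπ : (3:ℝ) < π := Real.pi_gt_three
  rw [show (x + 1) * (s * 2 / (2 * π * y)) = (x + 1) * (s * 2) / (2 * π * y) by ring,
    div_le_div_iff₀ (by positivity) (by positivity)]
  nlinarith [mul_nonneg (mul_nonneg hs (by linarith : (0:ℝ) ≤ y))
    (by nlinarith : (0:ℝ) ≤ π * x - x - 1)]

private lemma cos_diff_le (x y : ℝ) : |Real.cos x - Real.cos y| ≤ 2 := by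
  have h1 := Real.cos_le_one x
  have h2 := Real.cos_le_one y
  have h3 := Real.neg_one_le_cos x
  have h4 := Real.neg_one_le_cos y
  rw [abs_sub_le_iff]
  constructor <;> linarith

private lemma sin_diff_le (x y : ℝ) : |Real.sin x - Real.sin y| ≤ 2 := by
  have h1 := Real.sin_le_one x
  have h2 := Real.sin_le_one y
  have h3 := Real.neg_one_le_sin x
  have h4 := Real.neg_one_le_sin y
  rw [abs_sub_le_iff]
  constructor <;> linarith

/-- For a right-continuous `{-1,1}`-valued step function `σ` on `[0,1]`
with exactly `n` jumps, the Fourier coefficients against `√2 sin(2πkt)` and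
`√2 cos(2πkt)` are bounded by `√2 n / k`. The step structure is encoded by a
strictly monotone partition `a : Fin (n+2) → ℝ` of `[0,1]` such that `σ` is
constant on each piece `[a i, a (i+1))` and consecutive pieces carry different
values. -/
theorem fourier_coefficient_bound_of_step_path
    (n : ℕ) (σ : ℝ → ℝ)
    (hval : ∀ t ∈ Set.Ico (0:ℝ) 1, σ t = 1 ∨ σ t = -1)
    (a : Fin (n + 2) → ℝ)
    (ha0 : a 0 = 0) (ha1 : a (Fin.last (n + 1)) = 1) (hmono : StrictMono a)
    (hconst : ∀ i : Fin (n + 1),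
      ∀ t ∈ Set.Ico (a i.castSucc) (a i.succ), σ t = σ (a i.castSucc))
    (hjump : ∀ i : Fin n,
      σ (a i.castSucc.castSucc) ≠ σ (a i.succ.castSucc))
    (k : ℕ) (hk : 1 ≤ k) :
    |∫ t in (0:ℝ)..1, (Real.sqrt 2 * Real.sin (2 * π * k * t)) * σ t|
        ≤ Real.sqrt 2 * n / k ∧
    |∫ t in (0:ℝ)..1, (Real.sqrt 2 * Real.cos (2 * π * k * t)) * σ t|
        ≤ Real.sqrt 2 * n / k := by
  have hkpos : (0:ℝ) < k := by exact_mod_cast hk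
  have hc : (2 * π * (k:ℝ)) ≠ 0 := by positivity
  have hs2 : (0:ℝ) ≤ Real.sqrt 2 := Real.sqrt_nonneg 2
  set M : ℝ := Real.sqrt 2 * 2 / (2 * π * (k:ℝ)) with hMdef
  have hMnonneg : 0 ≤ M := by positivity
  have hfinish : (if n = 0 then (0:ℝ) else ((n:ℝ) + 1) * M) ≤ Real.sqrt 2 * n / k := by
    rcases Nat.eq_zero_or_pos n with h0 | hpos
    · subst h0; simp
    · rw [if_neg hpos.ne']
      have hn1 : (1:ℝ) ≤ (n:ℝ) := by exact_mod_cast hpos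
      have hk1 : (1:ℝ) ≤ (k:ℝ) := by exact_mod_cast hk
      exact arith_lemma (Real.sqrt 2) (n:ℝ) (k:ℝ) hs2 hn1 hk1
  constructor
  · -- sine part
    have hM : ∀ p q : ℝ, |∫ t in p..q, Real.sqrt 2 * Real.sin (2 * π * k * t)| ≤ M := by
      intro p q
      rw [intervalIntegral.integral_const_mul, int_sin_mul _ _ _ hc, abs_mul,
        abs_of_nonneg hs2, hMdef, mul_div_assoc]
      rw [abs_div, abs_of_pos (by positivity : (0:ℝ) < 2 * π * (k:ℝ))]
      gcongr
      exact cos_diff_le _ _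
    have hfull : ∫ t in (0:ℝ)..1, Real.sqrt 2 * Real.sin (2 * π * k * t) = 0 := by
      rw [intervalIntegral.integral_const_mul, int_sin_mul _ _ _ hc]
      rw [mul_zero, mul_one, show (2 * π * (k:ℝ)) = (k:ℝ) * (2 * π) by ring,
        Real.cos_nat_mul_two_pi, Real.cos_zero]
      simp
    exact le_trans (abs_integral_le n σ hval a ha0 ha1 hmono hconst _
      (by fun_prop) M hM hfull) hfinish
  · -- cosine part
    have hM : ∀ p q : ℝ, |∫ t in p..q, Real.sqrt 2 * Real.cos (2 * π * k * t)| ≤ M := by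
      intro p q
      rw [intervalIntegral.integral_const_mul, int_cos_mul _ _ _ hc, abs_mul,
        abs_of_nonneg hs2, hMdef, mul_div_assoc]
      rw [abs_div, abs_of_pos (by positivity : (0:ℝ) < 2 * π * (k:ℝ))]
      gcongr
      exact sin_diff_le _ _
    have hfull : ∫ t in (0:ℝ)..1, Real.sqrt 2 * Real.cos (2 * π * k * t) = 0 := by
      rw [intervalIntegral.integral_const_mul, int_cos_mul _ _ _ hc]
      rw [mul_zero, mul_one, show (2 * π * (k:ℝ)) = ((2 * k : ℕ):ℝ) * π by push_cast; ring,
        Real.sin_nat_mul_pi, Real.sin_zero]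
      simp
    exact le_trans (abs_integral_le n σ hval a ha0 ha1 hmono hconst _
      (by fun_prop) M hM hfull) hfinish
end

section
/- Let (X_σ)_{σ∈S} be a centered Gaussian process indexed by a finite (or countable) set S with Var(X_σ) ≤ v for all σ. Let μ be a probability measure on S and A ⊂ S with μ(A) > 0. Then E[ log(Σ_{σ∈S} μ(σ)e^{X_σ}) − log(Σ_{σ∈A} μ(σ)e^{X_σ}) ] ≤ log(1 + e^{2v}·μ(Aᶜ)/μ(A)). -/
open MeasureTheory ProbabilityTheory Real
open scoped NNReal ENNReal

section Aux
open Set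

lemma my_integrable_sq_exp {b : ℝ} (hb : 0 < b) :
    Integrable (fun x : ℝ => x ^ 2 * Real.exp (-b * x ^ 2)) := by
  have h := integrable_rpow_mul_exp_neg_mul_sq hb (s := 2) (by norm_num)
  have heq : (fun x : ℝ => x ^ (2:ℝ) * Real.exp (-b * x ^ 2))
      = fun x : ℝ => x ^ 2 * Real.exp (-b * x ^ 2) := by
    funext x
    rw [show ((2:ℝ)) = ((2:ℕ):ℝ) by norm_num, Real.rpow_natCast]
  rwa [heq] at h

lemma my_integral_sq_exp {b : ℝ} (hb : 0 < b) :
    ∫ x : ℝ, x ^ 2 * Real.exp (-b * x ^ 2) = Real.sqrt (π / b) / (2 * b) := by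
  have h1 : ∫ x : ℝ, x ^ 2 * Real.exp (-b * x ^ 2)
      = 2 * ∫ x in Ioi (0:ℝ), x ^ 2 * Real.exp (-b * x ^ 2) := by
    rw [← integral_comp_abs (f := fun t : ℝ => t ^ 2 * Real.exp (-b * t ^ 2))]
    congr 1
    funext x
    rw [sq_abs]
  have h2 : ∫ x in Ioi (0:ℝ), x ^ 2 * Real.exp (-b * x ^ 2)
      = ∫ y in Ioi (0:ℝ), y ^ ((3:ℝ)/2 - 1) * Real.exp (-(b * y)) / 2 := by
    rw [← integral_comp_rpow_Ioi_of_pos (p := 2)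
      (g := fun y : ℝ => y ^ ((3:ℝ)/2 - 1) * Real.exp (-(b * y)) / 2) zero_lt_two]
    refine setIntegral_congr_fun measurableSet_Ioi (fun x hx => ?_)
    have hx0 : (0:ℝ) < x := hx
    have hx2 : x ^ ((2:ℝ)) = x ^ 2 := by
      rw [show ((2:ℝ)) = ((2:ℕ):ℝ) by norm_num, Real.rpow_natCast]
    have h12 : (x ^ 2 : ℝ) ^ ((3:ℝ)/2 - 1) = x := by
      rw [show (3:ℝ)/2 - 1 = 1/2 by norm_num, ← Real.rpow_natCast x 2,
        ← Real.rpow_mul hx0.le]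
      norm_num
    simp only [smul_eq_mul, hx2, h12]
    rw [show (2:ℝ) - 1 = 1 by norm_num, Real.rpow_one, neg_mul]
    ring
  have h3 : ∫ y in Ioi (0:ℝ), y ^ ((3:ℝ)/2 - 1) * Real.exp (-(b * y)) / 2
      = (1 / b) ^ ((3:ℝ)/2) * Real.Gamma ((3:ℝ)/2) / 2 := by
    rw [integral_div, Real.integral_rpow_mul_exp_neg_mul_Ioi (by norm_num) hb]
  have hGamma : Real.Gamma ((3:ℝ)/2) = Real.sqrt π / 2 := by
    rw [show ((3:ℝ)/2) = 1/2 + 1 by norm_num, Real.Gamma_add_one (by norm_num),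
      Real.Gamma_one_half_eq]
    ring
  rw [h1, h2, h3, hGamma]
  have hb' : (0:ℝ) < 1 / b := by positivity
  have h4 : ((1:ℝ) / b) ^ ((3:ℝ)/2) = (1 / b) * Real.sqrt (1 / b) := by
    rw [show ((3:ℝ)/2) = 1 + 1/2 by norm_num, Real.rpow_add hb', Real.rpow_one,
      ← Real.sqrt_eq_rpow]
  rw [h4]
  have h5 : Real.sqrt (π / b) = Real.sqrt π * Real.sqrt (1 / b) := by
    rw [← Real.sqrt_mul pi_pos.le]
    ring_nf
  rw [h5]
  field_simp


lemma my_integral_gaussianReal (m : ℝ) {v : ℝ≥0} (hv : v ≠ 0) (g : ℝ → ℝ) :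
    ∫ x, g x ∂(gaussianReal m v) = ∫ x, gaussianPDFReal m v x * g x := by
  rw [gaussianReal_of_var_ne_zero _ hv]
  have hpdf : gaussianPDF m v = fun x => (((gaussianPDFReal m v x).toNNReal : ℝ≥0) : ℝ≥0∞) :=
    rfl
  rw [hpdf, integral_withDensity_eq_integral_smul
    ((measurable_gaussianPDFReal m v).real_toNNReal) g]
  congr 1
  funext x
  rw [NNReal.smul_def, smul_eq_mul, Real.coe_toNNReal _ (gaussianPDFReal_nonneg m v x)]

lemma my_integrable_gaussianReal (m : ℝ) {v : ℝ≥0} (hv : v ≠ 0) (g : ℝ → ℝ) :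
    Integrable g (gaussianReal m v) ↔ Integrable (fun x => gaussianPDFReal m v x * g x) := by
  rw [gaussianReal_of_var_ne_zero _ hv]
  have hpdf : gaussianPDF m v = fun x => (((gaussianPDFReal m v x).toNNReal : ℝ≥0) : ℝ≥0∞) :=
    rfl
  rw [hpdf, integrable_withDensity_iff_integrable_smul
    ((measurable_gaussianPDFReal m v).real_toNNReal)]
  constructor <;> intro h <;>
  · refine h.congr ?_
    refine ae_of_all _ fun x => ?_
    simp only [NNReal.smul_def, smul_eq_mul,
      Real.coe_toNNReal _ (gaussianPDFReal_nonneg m v x)]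

lemma my_sq_pdf (u : ℝ≥0) (hu : u ≠ 0) (x : ℝ) :
    gaussianPDFReal 0 u x * x ^ 2
      = (Real.sqrt (2 * π * u))⁻¹ * (x ^ 2 * Real.exp (-(2 * (u:ℝ))⁻¹ * x ^ 2)) := by
  have hu0 : (0:ℝ) < (u:ℝ) := lt_of_le_of_ne (u.coe_nonneg) (by exact_mod_cast (Ne.symm hu))
  rw [gaussianPDFReal]
  have : -(x - 0) ^ 2 / (2 * (u:ℝ)) = -(2 * (u:ℝ))⁻¹ * x ^ 2 := by
    field_simp
    ring
  rw [this]
  ring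

lemma my_integrable_sq_gaussianReal (u : ℝ≥0) :
    Integrable (fun x => x ^ 2) (gaussianReal 0 u) := by
  by_cases hu : u = 0
  · subst hu
    simp only [gaussianReal_zero_var]
    exact (integrable_const (((0:ℝ)) ^ 2)).congr (ae_eq_dirac (fun x : ℝ => x ^ 2)).symm
  · have hu0 : (0:ℝ) < (u:ℝ) := lt_of_le_of_ne (u.coe_nonneg) (by exact_mod_cast (Ne.symm hu))
    rw [my_integrable_gaussianReal 0 hu]
    have hb : (0:ℝ) < (2 * (u:ℝ))⁻¹ := by positivity
    have h := (my_integrable_sq_exp hb).const_mul (Real.sqrt (2 * π * u))⁻¹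
    refine h.congr (ae_of_all _ fun x => ?_)
    simp only [my_sq_pdf u hu x]

lemma my_integral_sq_gaussianReal (u : ℝ≥0) :
    ∫ x, x ^ 2 ∂(gaussianReal 0 u) = (u:ℝ) := by
  by_cases hu : u = 0
  · subst hu
    simp
  · have hu0 : (0:ℝ) < (u:ℝ) := lt_of_le_of_ne (u.coe_nonneg) (by exact_mod_cast (Ne.symm hu))
    rw [my_integral_gaussianReal 0 hu]
    have hb : (0:ℝ) < (2 * (u:ℝ))⁻¹ := by positivity
    calc ∫ x, gaussianPDFReal 0 u x * x ^ 2
        = ∫ x, (Real.sqrt (2 * π * u))⁻¹ * (x ^ 2 * Real.exp (-(2 * (u:ℝ))⁻¹ * x ^ 2)) := by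
          congr 1; funext x; exact my_sq_pdf u hu x
      _ = (Real.sqrt (2 * π * u))⁻¹ * ∫ x, x ^ 2 * Real.exp (-(2 * (u:ℝ))⁻¹ * x ^ 2) := by
          rw [integral_const_mul]
      _ = (Real.sqrt (2 * π * u))⁻¹ * (Real.sqrt (π / (2 * (u:ℝ))⁻¹) / (2 * (2 * (u:ℝ))⁻¹)) := by
          rw [my_integral_sq_exp hb]
      _ = (u:ℝ) := by
          have h1 : π / (2 * (u:ℝ))⁻¹ = 2 * π * u := by field_simp
          have h2 : (2 * (2 * (u:ℝ))⁻¹) = ((u:ℝ))⁻¹ := by field_simp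
          rw [h1, h2]
          have h3 : Real.sqrt (2 * π * u) ≠ 0 := by
            refine Real.sqrt_ne_zero'.mpr (by positivity)
          field_simp

lemma my_exp_pdf (u : ℝ≥0) (hu : u ≠ 0) (x : ℝ) :
    gaussianPDFReal 0 u x * Real.exp x
      = Real.exp ((u:ℝ) / 2) * gaussianPDFReal (u:ℝ) u x := by
  have hu0 : (0:ℝ) < (u:ℝ) := lt_of_le_of_ne (u.coe_nonneg) (by exact_mod_cast (Ne.symm hu))
  rw [gaussianPDFReal, gaussianPDFReal, mul_assoc, ← Real.exp_add, mul_left_comm,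
    ← Real.exp_add]
  congr 2
  field_simp
  ring

lemma my_integrable_exp_gaussianReal (u : ℝ≥0) :
    Integrable Real.exp (gaussianReal 0 u) := by
  by_cases hu : u = 0
  · subst hu
    simp only [gaussianReal_zero_var]
    exact (integrable_const (Real.exp 0)).congr (ae_eq_dirac Real.exp).symm
  · rw [my_integrable_gaussianReal 0 hu]
    have h := (integrable_gaussianPDFReal (u:ℝ) u).const_mul (Real.exp ((u:ℝ)/2))
    refine h.congr (ae_of_all _ fun x => ?_)
    simp only [my_exp_pdf u hu x]

lemma my_integral_exp_gaussianReal (u : ℝ≥0) :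
    ∫ x, Real.exp x ∂(gaussianReal 0 u) = Real.exp ((u:ℝ) / 2) := by
  by_cases hu : u = 0
  · subst hu
    simp
  · rw [my_integral_gaussianReal 0 hu]
    calc ∫ x, gaussianPDFReal 0 u x * Real.exp x
        = ∫ x, Real.exp ((u:ℝ)/2) * gaussianPDFReal (u:ℝ) u x := by
          congr 1; funext x; exact my_exp_pdf u hu x
      _ = Real.exp ((u:ℝ)/2) * ∫ x, gaussianPDFReal (u:ℝ) u x := integral_const_mul _ _
      _ = Real.exp ((u:ℝ)/2) := by
          rw [integral_gaussianPDFReal_eq_one _ hu, mul_one]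

end Aux

set_option maxHeartbeats 1000000 in
/-- Abstract restriction estimate for the free energy. Let `(X_σ)` be a
centered Gaussian process on a finite index set `S` (every linear combination of the
`X_σ` is a centered Gaussian) with `Var(X_σ) ≤ v`, let `w` be a probability weight on
`S` and `A ⊆ S` with `w(A) > 0`. Then
`E[log ∑_σ w(σ)e^{X_σ} - log ∑_{σ∈A} w(σ)e^{X_σ}] ≤ log(1 + e^{2v} w(Aᶜ)/w(A))`. -/
theorem gaussian_free_energy_restriction_bound
    {S : Type*} [Fintype S] [DecidableEq S]
    {Ω : Type*} [MeasurableSpace Ω] (μ : Measure Ω) [IsProbabilityMeasure μ]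
    (X : S → Ω → ℝ) (hmeas : ∀ σ, Measurable (X σ))
    (hGauss : ∀ c : S → ℝ, ∃ u : NNReal,
      Measure.map (fun ω => ∑ σ, c σ * X σ ω) μ = gaussianReal 0 u)
    (v : ℝ) (hv : 0 ≤ v)
    (hVar : ∀ σ, (∫ ω, (X σ ω) ^ 2 ∂μ) ≤ v)
    (w : S → ℝ) (hw : ∀ σ, 0 ≤ w σ) (hw1 : ∑ σ, w σ = 1)
    (A : Finset S) (hA : 0 < ∑ σ ∈ A, w σ) :
    (∫ ω, (Real.log (∑ σ, w σ * Real.exp (X σ ω))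
        - Real.log (∑ σ ∈ A, w σ * Real.exp (X σ ω))) ∂μ)
      ≤ Real.log (1 + Real.exp (2 * v) * (∑ σ ∈ Aᶜ, w σ) / (∑ σ ∈ A, w σ)) := by
  classical
  set wA := ∑ σ ∈ A, w σ with hwA_def
  set wC := ∑ σ ∈ Aᶜ, w σ with hwC_def
  have hwA : 0 < wA := hA
  have hwC : 0 ≤ wC := Finset.sum_nonneg fun σ _ => hw σ
  set p : S → ℝ := fun σ => w σ / wA with hp_def
  have hp0 : ∀ σ, 0 ≤ p σ := fun σ => div_nonneg (hw σ) hwA.le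
  have hpsum : ∑ σ ∈ A, p σ = 1 := by
    rw [hp_def, ← Finset.sum_div]
    exact div_self hwA.ne'
  set Y : Ω → ℝ := fun ω => ∑ σ ∈ A, p σ * X σ ω with hY_def
  have hYmeas : Measurable Y :=
    Finset.measurable_sum _ fun σ _ => (hmeas σ).const_mul _
  -- integrability of squares
  have hXsq : ∀ σ, Integrable (fun ω => (X σ ω) ^ 2) μ := by
    intro σ
    obtain ⟨u, hu⟩ := hGauss (fun σ' => if σ' = σ then 1 else 0)
    have hfeq : (fun ω => ∑ σ', (if σ' = σ then (1:ℝ) else 0) * X σ' ω) = X σ := by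
      funext ω
      simp [ite_mul]
    rw [hfeq] at hu
    have hg : AEStronglyMeasurable (fun x : ℝ => x ^ 2) (Measure.map (X σ) μ) := by
      rw [hu]; exact (measurable_id.pow_const 2).aestronglyMeasurable
    have hi : Integrable (fun x : ℝ => x ^ 2) (Measure.map (X σ) μ) := by
      rw [hu]; exact my_integrable_sq_gaussianReal u
    exact (integrable_map_measure hg (hmeas σ).aemeasurable).mp hi
  -- Gaussian law of the differences
  have key : ∀ τ : S, ∃ u : ℝ≥0, Measure.map (fun ω => X τ ω - Y ω) μ = gaussianReal 0 u := by
    intro τ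
    obtain ⟨u, hu⟩ := hGauss (fun σ => (if σ = τ then 1 else 0) - (if σ ∈ A then p σ else 0))
    refine ⟨u, ?_⟩
    rw [← hu]
    congr 1
    funext ω
    simp only [sub_mul, ite_mul, one_mul, zero_mul, Finset.sum_sub_distrib]
    rw [Finset.sum_ite_eq' Finset.univ τ (fun σ => X σ ω), Finset.sum_ite_mem,
      Finset.univ_inter]
    simp [hY_def]
  -- per-τ exponential moment facts
  have hfacts : ∀ τ : S, Integrable (fun ω => Real.exp (X τ ω - Y ω)) μ ∧
      ∫ ω, Real.exp (X τ ω - Y ω) ∂μ ≤ Real.exp (2 * v) := by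
    intro τ
    obtain ⟨u, hu⟩ := key τ
    have hfm : Measurable (fun ω => X τ ω - Y ω) := (hmeas τ).sub hYmeas
    have hint : Integrable (fun ω => Real.exp (X τ ω - Y ω)) μ := by
      have hg : AEStronglyMeasurable Real.exp (Measure.map (fun ω => X τ ω - Y ω) μ) := by
        rw [hu]; exact Real.continuous_exp.aestronglyMeasurable
      have hi : Integrable Real.exp (Measure.map (fun ω => X τ ω - Y ω) μ) := by
        rw [hu]; exact my_integrable_exp_gaussianReal u
      exact (integrable_map_measure hg hfm.aemeasurable).mp hi
    refine ⟨hint, ?_⟩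
    have hsq : ∫ ω, (X τ ω - Y ω) ^ 2 ∂μ = (u:ℝ) := by
      have h := integral_map (μ := μ) (φ := fun ω => X τ ω - Y ω) (f := fun x : ℝ => x ^ 2)
        hfm.aemeasurable ((measurable_id.pow_const 2).aestronglyMeasurable)
      rw [hu, my_integral_sq_gaussianReal] at h
      exact h.symm
    have hYsq_le : ∀ ω, (Y ω) ^ 2 ≤ ∑ σ ∈ A, p σ * (X σ ω) ^ 2 := by
      intro ω
      have h := (Even.convexOn_pow (even_two) (𝕜 := ℝ)).map_sum_le (t := A)
        (w := p) (p := fun σ => X σ ω) (fun σ _ => hp0 σ) hpsum (fun σ _ => trivial)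
      simpa [smul_eq_mul, hY_def] using h
    have hptsum : ∀ ω, (X τ ω - Y ω) ^ 2
        ≤ 2 * (X τ ω) ^ 2 + 2 * ∑ σ ∈ A, p σ * (X σ ω) ^ 2 := by
      intro ω
      nlinarith [sq_nonneg (X τ ω + Y ω), hYsq_le ω]
    have hsum_int : Integrable (fun ω => ∑ σ ∈ A, p σ * (X σ ω) ^ 2) μ :=
      integrable_finset_sum _ fun σ _ => (hXsq σ).const_mul _
    have hg_int : Integrable
        (fun ω => 2 * (X τ ω) ^ 2 + 2 * ∑ σ ∈ A, p σ * (X σ ω) ^ 2) μ :=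
      ((hXsq τ).const_mul 2).add (hsum_int.const_mul 2)
    have hu4 : (u:ℝ) ≤ 4 * v := by
      rw [← hsq]
      calc ∫ ω, (X τ ω - Y ω) ^ 2 ∂μ
          ≤ ∫ ω, (2 * (X τ ω) ^ 2 + 2 * ∑ σ ∈ A, p σ * (X σ ω) ^ 2) ∂μ :=
            integral_mono_of_nonneg (ae_of_all _ fun ω => sq_nonneg _) hg_int
              (ae_of_all _ hptsum)
        _ = 2 * ∫ ω, (X τ ω) ^ 2 ∂μ
              + 2 * ∑ σ ∈ A, p σ * ∫ ω, (X σ ω) ^ 2 ∂μ := by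
            rw [integral_add ((hXsq τ).const_mul 2) (hsum_int.const_mul 2),
              integral_const_mul, integral_const_mul, integral_finset_sum _
                (fun σ _ => (hXsq σ).const_mul _)]
            congr 2
            exact Finset.sum_congr rfl fun σ _ => integral_const_mul _ _
        _ ≤ 2 * v + 2 * ∑ σ ∈ A, p σ * v := by
            gcongr with σ hσ
            · exact hVar τ
            · exact hp0 σ
            · exact hVar σ
        _ = 4 * v := by
            rw [← Finset.sum_mul, hpsum]
            ring
    have hval : ∫ ω, Real.exp (X τ ω - Y ω) ∂μ = Real.exp ((u:ℝ) / 2) := by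
      have h := integral_map (μ := μ) (φ := fun ω => X τ ω - Y ω) (f := Real.exp)
        hfm.aemeasurable Real.continuous_exp.aestronglyMeasurable
      rw [hu, my_integral_exp_gaussianReal] at h
      exact h.symm
    rw [hval]
    exact Real.exp_le_exp.mpr (by linarith)
  -- the dominating function
  set m := 1 + Real.exp (2 * v) * wC / wA with hm_def
  have hm1 : (1:ℝ) ≤ m := le_add_of_nonneg_right (by positivity)
  have hm0 : (0:ℝ) < m := lt_of_lt_of_le one_pos hm1
  set G : Ω → ℝ := fun ω => 1 + ∑ τ ∈ Aᶜ, (w τ / wA) * Real.exp (X τ ω - Y ω) with hG_def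
  have hGsum_int : Integrable (fun ω => ∑ τ ∈ Aᶜ, (w τ / wA) * Real.exp (X τ ω - Y ω)) μ :=
    integrable_finset_sum _ fun τ _ => ((hfacts τ).1).const_mul _
  have hGint : Integrable G μ := (integrable_const 1).add hGsum_int
  have hGle : ∫ ω, G ω ∂μ ≤ m := by
    rw [hG_def]
    rw [integral_add (integrable_const 1) hGsum_int, integral_const,
      integral_finset_sum _ (fun τ _ => ((hfacts τ).1).const_mul _)]
    simp only [probReal_univ, ENNReal.toReal_one, smul_eq_mul, one_mul]
    rw [hm_def]
    have hbound : ∑ τ ∈ Aᶜ, ∫ ω, (w τ / wA) * Real.exp (X τ ω - Y ω) ∂μ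
        ≤ Real.exp (2 * v) * wC / wA := by
      have h1 : ∀ τ ∈ Aᶜ, ∫ ω, (w τ / wA) * Real.exp (X τ ω - Y ω) ∂μ
          ≤ (w τ / wA) * Real.exp (2 * v) := by
        intro τ _
        rw [integral_const_mul]
        exact mul_le_mul_of_nonneg_left (hfacts τ).2 (div_nonneg (hw τ) hwA.le)
      calc ∑ τ ∈ Aᶜ, ∫ ω, (w τ / wA) * Real.exp (X τ ω - Y ω) ∂μ
          ≤ ∑ τ ∈ Aᶜ, (w τ / wA) * Real.exp (2 * v) := Finset.sum_le_sum h1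
        _ = Real.exp (2 * v) * wC / wA := by
            rw [hwC_def, mul_div_assoc, Finset.sum_div, Finset.mul_sum]
            exact Finset.sum_congr rfl fun τ _ => by ring
    linarith
  -- pointwise facts
  obtain ⟨σ₀, hσ₀A, hσ₀⟩ : ∃ σ ∈ A, 0 < w σ := by
    by_contra h
    push_neg at h
    have : wA ≤ 0 := Finset.sum_nonpos fun σ hσ => h σ hσ
    exact absurd this (not_le.mpr hwA)
  have hZA_pos : ∀ ω, 0 < ∑ σ ∈ A, w σ * Real.exp (X σ ω) := by
    intro ω
    have h0 : 0 < w σ₀ * Real.exp (X σ₀ ω) := by positivity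
    exact lt_of_lt_of_le h0 (Finset.single_le_sum
      (f := fun σ => w σ * Real.exp (X σ ω))
      (fun σ _ => mul_nonneg (hw σ) (Real.exp_pos _).le) hσ₀A)
  have hsplit : ∀ ω, (∑ σ, w σ * Real.exp (X σ ω))
      = (∑ σ ∈ A, w σ * Real.exp (X σ ω)) + ∑ τ ∈ Aᶜ, w τ * Real.exp (X τ ω) := by
    intro ω
    exact (Finset.sum_add_sum_compl A _).symm
  have hZC_nonneg : ∀ ω, 0 ≤ ∑ τ ∈ Aᶜ, w τ * Real.exp (X τ ω) := by
    intro ω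
    exact Finset.sum_nonneg fun τ _ => mul_nonneg (hw τ) (Real.exp_pos _).le
  have hZ_pos : ∀ ω, 0 < ∑ σ, w σ * Real.exp (X σ ω) := by
    intro ω
    rw [hsplit ω]
    exact lt_of_lt_of_le (hZA_pos ω) (le_add_of_nonneg_right (hZC_nonneg ω))
  have hjen : ∀ ω, wA * Real.exp (Y ω) ≤ ∑ σ ∈ A, w σ * Real.exp (X σ ω) := by
    intro ω
    have h := convexOn_exp.map_sum_le (t := A) (w := p) (p := fun σ => X σ ω)
      (fun σ _ => hp0 σ) hpsum (fun σ _ => trivial)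
    have h2 : Real.exp (Y ω) ≤ ∑ σ ∈ A, p σ * Real.exp (X σ ω) := by
      simpa [smul_eq_mul, hY_def] using h
    calc wA * Real.exp (Y ω) ≤ wA * ∑ σ ∈ A, p σ * Real.exp (X σ ω) :=
        mul_le_mul_of_nonneg_left h2 hwA.le
      _ = ∑ σ ∈ A, w σ * Real.exp (X σ ω) := by
        rw [Finset.mul_sum]
        refine Finset.sum_congr rfl fun σ _ => ?_
        rw [hp_def]
        field_simp
  have hfrac : ∀ ω, (∑ τ ∈ Aᶜ, w τ * Real.exp (X τ ω))
      / (∑ σ ∈ A, w σ * Real.exp (X σ ω))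
      ≤ ∑ τ ∈ Aᶜ, (w τ / wA) * Real.exp (X τ ω - Y ω) := by
    intro ω
    have hden : 0 < wA * Real.exp (Y ω) := by positivity
    calc (∑ τ ∈ Aᶜ, w τ * Real.exp (X τ ω)) / (∑ σ ∈ A, w σ * Real.exp (X σ ω))
        ≤ (∑ τ ∈ Aᶜ, w τ * Real.exp (X τ ω)) / (wA * Real.exp (Y ω)) := by
          gcongr
          · exact hZC_nonneg ω
          · exact hjen ω
      _ = ∑ τ ∈ Aᶜ, (w τ / wA) * Real.exp (X τ ω - Y ω) := by
          rw [Finset.sum_div]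
          refine Finset.sum_congr rfl fun τ _ => ?_
          rw [Real.exp_sub]
          field_simp
  -- pointwise log bound
  have hpt : ∀ ω, Real.log (∑ σ, w σ * Real.exp (X σ ω))
      - Real.log (∑ σ ∈ A, w σ * Real.exp (X σ ω))
      ≤ (Real.log m - 1) + G ω * m⁻¹ := by
    intro ω
    set Z := ∑ σ, w σ * Real.exp (X σ ω)
    set ZA := ∑ σ ∈ A, w σ * Real.exp (X σ ω)
    have hZ := hZ_pos ω
    have hZA := hZA_pos ω
    have h1 : Real.log Z - Real.log ZA = Real.log (Z / ZA) :=
      (Real.log_div hZ.ne' hZA.ne').symm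
    have h2 : Z / ZA ≤ G ω := by
      rw [hG_def]
      have hzz : Z = ZA + ∑ τ ∈ Aᶜ, w τ * Real.exp (X τ ω) := hsplit ω
      have : Z / ZA = 1 + (∑ τ ∈ Aᶜ, w τ * Real.exp (X τ ω)) / ZA := by
        rw [hzz, add_div, div_self hZA.ne']
      rw [this]
      exact add_le_add_right (hfrac ω) 1
    have h3 : Real.log (Z / ZA) ≤ Real.log m + (Z / ZA) / m - 1 := by
      have h5 : Real.log ((Z / ZA) / m) ≤ (Z / ZA) / m - 1 :=
        Real.log_le_sub_one_of_pos (by positivity)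
      rw [Real.log_div (by positivity) hm0.ne'] at h5
      linarith
    have h4 : (Z / ZA) / m ≤ G ω * m⁻¹ := by
      rw [div_eq_mul_inv]
      exact mul_le_mul_of_nonneg_right h2 (by positivity)
    rw [h1]
    linarith
  have hnonneg : ∀ ω, 0 ≤ Real.log (∑ σ, w σ * Real.exp (X σ ω))
      - Real.log (∑ σ ∈ A, w σ * Real.exp (X σ ω)) := by
    intro ω
    have hle : (∑ σ ∈ A, w σ * Real.exp (X σ ω)) ≤ ∑ σ, w σ * Real.exp (X σ ω) := by
      rw [hsplit ω]
      exact le_add_of_nonneg_right (hZC_nonneg ω)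
    have := Real.log_le_log (hZA_pos ω) hle
    linarith
  -- finish
  have hrhs_int : Integrable (fun ω => (Real.log m - 1) + G ω * m⁻¹) μ :=
    (integrable_const _).add (hGint.mul_const _)
  calc (∫ ω, (Real.log (∑ σ, w σ * Real.exp (X σ ω))
        - Real.log (∑ σ ∈ A, w σ * Real.exp (X σ ω))) ∂μ)
      ≤ ∫ ω, ((Real.log m - 1) + G ω * m⁻¹) ∂μ :=
        integral_mono_of_nonneg (ae_of_all _ hnonneg) hrhs_int (ae_of_all _ hpt)
    _ = (Real.log m - 1) + (∫ ω, G ω ∂μ) * m⁻¹ := by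
        rw [integral_add (integrable_const _) (hGint.mul_const _), integral_const,
          integral_mul_const]
        simp
    _ ≤ (Real.log m - 1) + m * m⁻¹ := by
        gcongr
    _ = Real.log m := by
        rw [mul_inv_cancel₀ hm0.ne']
        ring
end
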